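/- Let f be a complex function analytic on an open set containing the closed unit disk {z ∈ ℂ : |z| ≤ 1}, with Taylor expansion f(z) = Σ_{j=1}^∞ c_j·z^j (so in particular f(0) = c_0 = 0). Then for every positive integer n the series Σ_{k=1}^∞ (μ(k)/(k·n))·Σ_{m=1}^{k·n} f(e^{2πim/(k·n)}) converges and equals c_n. -/

import Mathlib

open Filter ArithmeticFunction Real FormalMultilinearSeries ENNReal

private lemma sum_divisors_moebius' (s : ℕ) :
    (∑ d ∈ s.divisors, (moebius d : ℤ)) = if s = 1 then 1 else 0 := by
  have := congrArg (fun g : ArithmeticFunction ℤ => g s) moebius_mul_coe_zeta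
  simp only [coe_mul_zeta_apply, one_apply] at this
  exact this

private lemma sum_moebius_dvd_key {n m : ℕ} (hn : 1 ≤ n) (hm : 1 ≤ m) :
    (∑ k ∈ Finset.Icc 1 m, if k * n ∣ m then (moebius k : ℤ) else 0)
      = if m = n then 1 else 0 := by
  by_cases hdvd : n ∣ m
  · obtain ⟨s, rfl⟩ := hdvd
    have hn0 : 0 < n := hn
    have hs : 1 ≤ s := by
      rcases Nat.eq_zero_or_pos s with h | h
      · subst h; simp at hm
      · exact h
    have hcond : ∀ k : ℕ, (k * n ∣ n * s ↔ k ∣ s) := by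
      intro k
      rw [mul_comm k n, mul_dvd_mul_iff_left hn0.ne']
    have hsub : Finset.Icc 1 s ⊆ Finset.Icc 1 (n * s) := by
      apply Finset.Icc_subset_Icc_right
      exact Nat.le_mul_of_pos_left s hn0
    have step1 : (∑ k ∈ Finset.Icc 1 (n * s), if k * n ∣ n * s then (moebius k : ℤ) else 0)
        = ∑ k ∈ Finset.Icc 1 s, if k ∣ s then (moebius k : ℤ) else 0 := by
      rw [← Finset.sum_subset hsub]
      · exact Finset.sum_congr rfl fun k _ => if_congr (hcond k) rfl rfl
      · intro k hk hk'
        simp only [Finset.mem_Icc] at hk hk'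
        rw [if_neg]
        intro hd
        rw [hcond k] at hd
        exact hk' ⟨hk.1, Nat.le_of_dvd hs hd⟩
    have step2 : (∑ k ∈ Finset.Icc 1 s, if k ∣ s then (moebius k : ℤ) else 0)
        = ∑ d ∈ s.divisors, (moebius d : ℤ) := by
      rw [Nat.divisors, ← Finset.Ico_add_one_right_eq_Icc, Finset.sum_filter]
    rw [step1, step2, sum_divisors_moebius' s]
    have : n * s = n ↔ s = 1 := by
      constructor
      · intro h
        by_contra hne
        rcases Nat.lt_or_ge s 1 with h1 | h1
        · omega
        · have : 2 ≤ s := by omega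
          nlinarith
      · intro h; rw [h, mul_one]
    exact (if_congr this.symm rfl rfl).symm ▸ rfl
  · have h1 : ∀ k ∈ Finset.Icc 1 m, (if k * n ∣ m then (moebius k : ℤ) else 0) = 0 := by
      intro k _
      rw [if_neg]
      exact fun h => hdvd ((dvd_mul_left n k).trans h)
    rw [Finset.sum_congr rfl h1, Finset.sum_const_zero, if_neg]
    rintro rfl; exact hdvd dvd_rfl

private lemma sum_Icc_one {M : Type*} [AddCommMonoid M] (f : ℕ → M) (N : ℕ) :
    ∑ k ∈ Finset.Icc 1 N, f k = ∑ k ∈ Finset.range N, f (k + 1) := by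
  rw [← Finset.Ico_add_one_right_eq_Icc, Finset.sum_Ico_eq_sum_range]
  simp only [Nat.add_sub_cancel]
  exact Finset.sum_congr rfl fun i _ => by rw [add_comm]

private lemma sum_exp_pow {N t : ℕ} (hN : 1 ≤ N) (ht : 1 ≤ t) :
    (∑ m ∈ Finset.Icc 1 N, Complex.exp (2 * π * Complex.I * t / N) ^ m)
      = if N ∣ t then (N : ℂ) else 0 := by
  have hN0 : (N : ℂ) ≠ 0 := Nat.cast_ne_zero.mpr (by omega)
  set w : ℂ := Complex.exp (2 * π * Complex.I * t / N) with hw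
  have hwN : w ^ N = 1 := by
    rw [hw, ← Complex.exp_nat_mul]
    have : (N : ℂ) * (2 * π * Complex.I * t / N) = (t : ℤ) * (2 * π * Complex.I) := by
      push_cast; field_simp
    rw [this, Complex.exp_int_mul_two_pi_mul_I]
  by_cases hdvd : N ∣ t
  · obtain ⟨s, rfl⟩ := hdvd
    have : w = 1 := by
      rw [hw]
      have : 2 * π * Complex.I * (↑(N * s)) / N = (s : ℤ) * (2 * π * Complex.I) := by
        push_cast; field_simp
      rw [this, Complex.exp_int_mul_two_pi_mul_I]
    simp [this, if_pos (Dvd.intro s rfl)]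
  · have hw1 : w ≠ 1 := by
      intro h
      rw [hw, Complex.exp_eq_one_iff] at h
      obtain ⟨z, hz⟩ := h
      apply hdvd
      have hI : (2 : ℂ) * π * Complex.I ≠ 0 := by
        simp [Complex.I_ne_zero, Real.pi_ne_zero, Complex.ofReal_ne_zero]
      have : (t : ℂ) = z * N := by
        field_simp at hz
        have h2 : (2 : ℂ) * π * Complex.I * t = 2 * π * Complex.I * (z * N) := by
          rw [hz]; ring
        exact mul_left_cancel₀ hI h2
      have h3 : (t : ℤ) = z * N := by exact_mod_cast this
      exact Int.natCast_dvd_natCast.mp ⟨z, by rw [h3]; ring⟩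
    have hgeom : (∑ m ∈ Finset.range N, w ^ m) = 0 := by
      rw [geom_sum_eq hw1, hwN, sub_self, zero_div]
    have : (∑ m ∈ Finset.Icc 1 N, w ^ m) = w * ∑ m ∈ Finset.range N, w ^ m := by
      rw [Finset.mul_sum, ← Finset.Ico_add_one_right_eq_Icc, Finset.sum_Ico_eq_sum_range]
      simp only [Nat.add_sub_cancel_left, Nat.add_sub_cancel]
      exact Finset.sum_congr rfl fun i _ => by rw [add_comm 1 i, pow_succ]; ring
    rw [this, hgeom, mul_zero, if_neg hdvd]

private lemma sum_exp_pow' {N t : ℕ} (hN : 1 ≤ N) (ht : 1 ≤ t) :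
    (∑ m ∈ Finset.Icc 1 N, Complex.exp (2 * π * Complex.I * m / N) ^ t)
      = if N ∣ t then (N : ℂ) else 0 := by
  rw [← sum_exp_pow hN ht]
  refine Finset.sum_congr rfl fun m _ => ?_
  rw [← Complex.exp_nat_mul, ← Complex.exp_nat_mul]
  congr 1
  ring

private lemma circle_sum (f : ℂ → ℂ) (c : ℕ → ℂ)
    (hc : ∀ z ∈ Metric.closedBall (0:ℂ) 1,
      HasSum (fun j : ℕ => c (j + 1) * z ^ (j + 1)) (f z))
    (N : ℕ) (hN : 1 ≤ N) :
    HasSum (fun j : ℕ => if N ∣ (j + 1) then (N : ℂ) * c (j + 1) else 0)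
      (∑ m ∈ Finset.Icc 1 N, f (Complex.exp (2 * π * Complex.I * m / N))) := by
  have hmem : ∀ m : ℕ, Complex.exp (2 * π * Complex.I * m / N) ∈ Metric.closedBall (0:ℂ) 1 := by
    intro m
    have harg : (2 * π * Complex.I * m / N : ℂ) = ((2 * π * m / N : ℝ) : ℂ) * Complex.I := by
      push_cast; ring
    rw [Metric.mem_closedBall, dist_zero_right, harg,
      Complex.norm_exp_ofReal_mul_I]
  have hsum : HasSum
      (fun j : ℕ => ∑ m ∈ Finset.Icc 1 N,
        c (j + 1) * Complex.exp (2 * π * Complex.I * m / N) ^ (j + 1))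
      (∑ m ∈ Finset.Icc 1 N, f (Complex.exp (2 * π * Complex.I * m / N))) :=
    hasSum_sum fun m _ => hc _ (hmem m)
  convert hsum using 2 with j
  rw [← Finset.mul_sum, sum_exp_pow' hN (by omega)]
  by_cases h : N ∣ (j + 1) <;> simp [h, mul_comm]

private lemma coeff_decay (f : ℂ → ℂ) (c : ℕ → ℂ) (U : Set ℂ)
    (hU : IsOpen U) (hUball : Metric.closedBall (0 : ℂ) 1 ⊆ U)
    (hf : AnalyticOnNhd ℂ f U)
    (hc : ∀ z ∈ Metric.closedBall (0 : ℂ) 1,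
      HasSum (fun j : ℕ => c (j + 1) * z ^ (j + 1)) (f z)) :
    ∃ C > (0:ℝ), ∃ a : ℝ, 0 < a ∧ a < 1 ∧ ∀ j : ℕ, ‖c (j + 1)‖ ≤ C * a ^ (j + 1) := by
  classical
  set c' : ℕ → ℂ := fun j => if j = 0 then 0 else c j with hc'
  have hcoeff : ∀ n : ℕ, (ofScalars ℂ c').coeff n = c' n := by
    intro n
    show ofScalars ℂ c' n (fun _ => 1) = c' n
    rw [ofScalars_apply_eq, one_pow, smul_eq_mul, mul_one]
  obtain ⟨ε, εpos, hε⟩ := (isCompact_closedBall (0:ℂ) 1).exists_cthickening_subset_open hU hUball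
  have hball : Metric.closedBall (0:ℂ) (1 + ε) ⊆ U := by
    refine Set.Subset.trans ?_ hε
    rw [cthickening_closedBall εpos.le zero_le_one]
    exact Metric.closedBall_subset_closedBall (by linarith)
  set R : NNReal := ⟨1 + ε, by positivity⟩ with hR
  have hRpos : 0 < R := by
    rw [← NNReal.coe_pos]
    show (0:ℝ) < 1 + ε
    positivity
  have hd : DifferentiableOn ℂ f (Metric.closedBall 0 (R : ℝ)) :=
    (hf.mono hball).differentiableOn
  have hp : HasFPowerSeriesOnBall f (cauchyPowerSeries f 0 R) 0 R :=
    hd.hasFPowerSeriesOnBall hRpos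
  have hbdd : ∃ M : ℝ, ∀ j : ℕ, ‖c' j‖ ≤ M := by
    have h1 := hc 1 (by simp)
    have h2 : Tendsto (fun j : ℕ => ‖c (j + 1) * (1:ℂ) ^ (j + 1)‖) atTop (nhds 0) := by
      simpa using h1.summable.tendsto_atTop_zero.norm
    obtain ⟨M, hM⟩ := h2.bddAbove_range
    refine ⟨M, fun j => ?_⟩
    cases j with
    | zero =>
        simp only [hc', if_pos rfl, norm_zero]
        exact le_trans (norm_nonneg _) (hM ⟨0, rfl⟩)
    | succ i =>
        have := hM ⟨i, rfl⟩
        simpa [hc'] using this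
  obtain ⟨M, hM⟩ := hbdd
  have hq : HasFPowerSeriesOnBall f (ofScalars ℂ c') 0 1 := by
    constructor
    · apply le_radius_of_bound _ M
      intro j
      rw [norm_apply_eq_norm_coef, hcoeff j]
      simpa using hM j
    · exact one_pos
    · intro y hy
      have hy1 : y ∈ Metric.closedBall (0:ℂ) 1 := by
        rw [EMetric.mem_ball, edist_zero_right] at hy
        rw [Metric.mem_closedBall, dist_zero_right]
        exact le_of_lt (by rw [enorm_eq_nnnorm] at hy; exact_mod_cast hy)
      have h0 := hc y hy1
      have heq : (fun n : ℕ => ofScalars ℂ c' n fun _ => y) = fun n => c' n * y ^ n := by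
        funext n; rw [ofScalars_apply_eq, smul_eq_mul]
      rw [heq, zero_add]
      have h5 : HasSum (fun n : ℕ => c' (n + 1) * y ^ (n + 1))
          (f y - ∑ i ∈ Finset.range 1, c' i * y ^ i) := by
        simpa [hc'] using h0
      exact (hasSum_nat_add_iff' 1).mp h5
  have heqs : ofScalars ℂ c' = cauchyPowerSeries f 0 R :=
    hq.hasFPowerSeriesAt.eq_formalMultilinearSeries hp.hasFPowerSeriesAt
  have hrad : (R : ℝ≥0∞) ≤ (ofScalars ℂ c').radius := by
    rw [heqs]; exact hp.r_le
  set r' : NNReal := ⟨1 + ε/2, by positivity⟩ with hr'def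
  have hr'R : r' < R := by
    rw [← NNReal.coe_lt_coe]
    show (1 + ε/2 : ℝ) < 1 + ε
    linarith
  have hr' : (r' : ℝ≥0∞) < (ofScalars ℂ c').radius :=
    lt_of_lt_of_le (by exact_mod_cast hr'R) hrad
  obtain ⟨C, hC0, hC⟩ := (ofScalars ℂ c').norm_mul_pow_le_of_lt_radius hr'
  refine ⟨C, hC0, (1 + ε/2)⁻¹, by positivity, ?_, ?_⟩
  · rw [inv_lt_one_iff₀]
    right; linarith
  · intro j
    have hb := hC (j + 1)
    rw [norm_apply_eq_norm_coef, hcoeff (j+1)] at hb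
    have hcc : ‖c (j+1)‖ = ‖c' (j+1)‖ := by simp [hc']
    have hpow : (0:ℝ) < (1 + ε/2) ^ (j+1) := by positivity
    rw [hcc]
    rw [inv_pow, mul_comm C, ← div_eq_inv_mul, le_div_iff₀ hpow]
    calc ‖c' (j+1)‖ * (1 + ε/2) ^ (j+1) = ‖c' (j+1)‖ * (r' : ℝ) ^ (j+1) := by norm_num [hr'def]; exact Or.inl rfl
    _ ≤ C := hb


/-- **AFT for Taylor coefficients of analytic functions (Theorem 5).**
If `f` is analytic on an open set containing the closed unit disk, with Taylor
expansion `f(z) = ∑_{j=1}^∞ c_j·z^j`, then for every `n ≥ 1` the series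
`∑_{k=1}^∞ (μ(k)/(kn))·∑_{m=1}^{kn} f(e^{2πim/(kn)})` converges to `c_n`. -/
theorem AFT_taylor_coefficients_analytic_closedBall
    (f : ℂ → ℂ) (c : ℕ → ℂ) (U : Set ℂ)
    (hU : IsOpen U) (hUball : Metric.closedBall (0 : ℂ) 1 ⊆ U)
    (hf : AnalyticOnNhd ℂ f U)
    (hc : ∀ z ∈ Metric.closedBall (0 : ℂ) 1,
      HasSum (fun j : ℕ => c (j + 1) * z ^ (j + 1)) (f z)) :
    ∀ n : ℕ, 1 ≤ n →
      Tendsto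
        (fun N : ℕ => ∑ k ∈ Finset.Icc 1 N,
          ((moebius k : ℂ) / (k * n)) *
            ∑ m ∈ Finset.Icc 1 (k * n),
              f (Complex.exp (2 * π * Complex.I * m / (k * n))))
        atTop (nhds (c n)) := by
  intro n hn
  classical
  obtain ⟨C, hC0, a, ha0, ha1, hdecay⟩ := coeff_decay f c U hU hUball hf hc
  set b : ℝ := Real.sqrt a with hbdef
  have hb0 : 0 < b := Real.sqrt_pos.mpr ha0
  have hb1 : b < 1 := by
    rw [hbdef, show (1:ℝ) = Real.sqrt 1 by simp]
    exact Real.sqrt_lt_sqrt ha0.le ha1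
  have hbsq : b * b = a := Real.mul_self_sqrt ha0.le
  set F : ℕ × ℕ → ℂ := fun p =>
    if (p.1 + 1) * n ∣ (p.2 + 1) then (moebius (p.1 + 1) : ℂ) * c (p.2 + 1) else 0 with hFdef
  -- moebius values are bounded by 1
  have hmoe : ∀ k : ℕ, ‖(moebius k : ℂ)‖ ≤ 1 := by
    intro k
    by_cases h : Squarefree k
    · rw [moebius_apply_of_squarefree h]
      push_cast
      rw [norm_pow, norm_neg, norm_one, one_pow]
    · simp [moebius_eq_zero_of_not_squarefree h]
  -- majorant and summability of F
  have hmaj : ∀ p : ℕ × ℕ, ‖F p‖ ≤ b ^ (p.1 + 1) * (C * b ^ (p.2 + 1)) := by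
    rintro ⟨k, j⟩
    simp only [hFdef]
    by_cases h : (k + 1) * n ∣ (j + 1)
    · rw [if_pos h]
      have hle1 : k + 1 ≤ j + 1 := by
        have h1 : (k + 1) * n ≤ j + 1 := Nat.le_of_dvd (by omega) h
        calc k + 1 ≤ (k+1) * n := Nat.le_mul_of_pos_right _ (by omega)
        _ ≤ j + 1 := h1
      have hbj : b ^ (j + 1) ≤ b ^ (k + 1) :=
        pow_le_pow_of_le_one hb0.le hb1.le hle1
      calc ‖(moebius (k+1) : ℂ) * c (j+1)‖ = ‖(moebius (k+1) : ℂ)‖ * ‖c (j+1)‖ := norm_mul _ _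
      _ ≤ 1 * (C * a ^ (j+1)) := by
          apply mul_le_mul (hmoe _) (hdecay j) (norm_nonneg _) zero_le_one
      _ = C * a ^ (j+1) := one_mul _
      _ = C * (b ^ (j+1) * b ^ (j+1)) := by rw [← hbsq, mul_pow]
      _ ≤ C * (b ^ (j+1) * b ^ (k+1)) := by
          apply mul_le_mul_of_nonneg_left _ hC0.le
          exact mul_le_mul_of_nonneg_left hbj (by positivity)
      _ = b ^ (k + 1) * (C * b ^ (j + 1)) := by ring
    · rw [if_neg h, norm_zero]
      positivity
  have hgeo : Summable (fun k : ℕ => b ^ (k + 1)) := by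
    have : Summable (fun k : ℕ => b * b ^ k) :=
      (summable_geometric_of_lt_one hb0.le hb1).mul_left b
    exact this.congr fun k => by rw [pow_succ']
  have hsummaj : Summable (fun p : ℕ × ℕ => b ^ (p.1 + 1) * (C * b ^ (p.2 + 1))) := by
    apply summable_mul_of_summable_norm (f := fun k : ℕ => b ^ (k+1))
      (g := fun j : ℕ => C * b ^ (j+1))
    · exact hgeo.congr fun k => by rw [Real.norm_of_nonneg (by positivity)]
    · exact (hgeo.mul_left C).congr fun k => by rw [Real.norm_of_nonneg (by positivity)]
  have hFs : Summable F := Summable.of_norm_bounded hsummaj hmaj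
  set T : ℂ := ∑' p, F p with hTdef
  have hT : HasSum F T := hFs.hasSum
  -- fiberwise in k
  have hinner : ∀ k : ℕ, Summable (fun j => F (k, j)) := fun k => hFs.prod_factor k
  set g : ℕ → ℂ := fun k => ∑' j, F (k, j) with hgdef
  have hg : HasSum g T := hT.prod_fiberwise fun k => (hinner k).hasSum
  -- inner indicator series
  have hDsummable : ∀ N : ℕ, Summable (fun j : ℕ => if N ∣ (j+1) then c (j+1) else 0) := by
    intro N
    apply Summable.of_norm_bounded (g := fun j : ℕ => C * a ^ (j+1))
    · have : Summable (fun j : ℕ => a ^ (j + 1)) := by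
        have : Summable (fun j : ℕ => a * a ^ j) :=
          (summable_geometric_of_lt_one ha0.le ha1).mul_left a
        exact this.congr fun k => by rw [pow_succ']
      exact this.mul_left C
    · intro j
      by_cases h : N ∣ (j + 1)
      · rw [if_pos h]; exact hdecay j
      · rw [if_neg h, norm_zero]; positivity
  set D : ℕ → ℂ := fun N => ∑' j, (if N ∣ (j+1) then c (j+1) else 0) with hDdef
  -- identification of g with the original terms
  have hgD : ∀ k : ℕ, g k = (moebius (k+1) : ℂ) * D ((k+1) * n) := by
    intro k
    rw [hgdef]
    simp only
    rw [hDdef]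
    simp only
    rw [← tsum_mul_left]
    apply tsum_congr
    intro j
    simp only [hFdef, mul_ite, mul_zero]
  -- per-term equality with the statement's sequence
  have hterm : ∀ k : ℕ,
      ((moebius (k+1) : ℂ) / ((k+1 : ℕ) * n)) *
        ∑ m ∈ Finset.Icc 1 ((k+1) * n),
          f (Complex.exp (2 * π * Complex.I * m / ((k+1 : ℕ) * n))) = g k := by
    intro k
    set N : ℕ := (k + 1) * n with hNdef
    have hN : 1 ≤ N := by
      rw [hNdef]; exact Nat.one_le_iff_ne_zero.mpr (by positivity)
    have hN0 : ((N : ℕ) : ℂ) ≠ 0 := Nat.cast_ne_zero.mpr (by omega)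
    have hcast : ((k+1 : ℕ) : ℂ) * (n : ℂ) = (N : ℂ) := by
      rw [hNdef]; push_cast; ring
    have hcs := circle_sum f c hc N hN
    have hD2 : HasSum (fun j : ℕ => if N ∣ (j+1) then c (j+1) else 0) (D N) :=
      (hDsummable N).hasSum
    have hD3 : HasSum (fun j : ℕ => if N ∣ (j+1) then (N : ℂ) * c (j+1) else 0)
        ((N : ℂ) * D N) := by
      have := hD2.mul_left (N : ℂ)
      exact this.congr_fun fun j => by rw [mul_ite, mul_zero]
    have hS : (∑ m ∈ Finset.Icc 1 N, f (Complex.exp (2 * π * Complex.I * m / (N : ℂ))))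
        = (N : ℂ) * D N := hcs.unique hD3
    rw [hgD k, ← hNdef, hcast, hS]
    field_simp
  -- the partial sums of the statement coincide with partial sums of g
  have hseq : ∀ K : ℕ,
      (∑ k ∈ Finset.Icc 1 K,
        ((moebius k : ℂ) / (k * n)) *
          ∑ m ∈ Finset.Icc 1 (k * n),
            f (Complex.exp (2 * π * Complex.I * m / (k * n))))
      = ∑ k ∈ Finset.range K, g k := by
    intro K
    rw [sum_Icc_one]
    exact Finset.sum_congr rfl fun k _ => hterm k
  -- compute T by summing in the other order
  have hfin : ∀ j k : ℕ, k ∉ Finset.range (j + 1) → F (k, j) = 0 := by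
    intro j k hk
    simp only [Finset.mem_range] at hk
    rw [hFdef]
    simp only
    rw [if_neg]
    intro hdvd
    have h1 : (k + 1) * n ≤ j + 1 := Nat.le_of_dvd (by omega) hdvd
    have h2 : k + 1 ≤ (k + 1) * n := Nat.le_mul_of_pos_right _ (by omega)
    omega
  have hcolsummable : ∀ j : ℕ, Summable fun k => F (k, j) := fun j =>
    summable_of_ne_finset_zero (hfin j)
  have hcol2 : (fun j : ℕ => ∑' k, F (k, j)) = fun j => if j = n - 1 then c n else 0 := by
    funext j
    rw [tsum_eq_sum (hfin j)]
    have : ∀ k, F (k, j)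
        = (if (k+1) * n ∣ (j+1) then ((moebius (k+1) : ℤ) : ℂ) else 0) * c (j + 1) := by
      intro k; rw [hFdef]; simp only [ite_mul, zero_mul]
    rw [Finset.sum_congr rfl fun k _ => this k, ← Finset.sum_mul, ← sum_Icc_one
      (fun k => (if k * n ∣ (j+1) then ((moebius k : ℤ) : ℂ) else 0)) (j+1)]
    have hkey := sum_moebius_dvd_key (n := n) (m := j + 1) hn (by omega)
    have hkeyC : (∑ k ∈ Finset.Icc 1 (j+1), if k * n ∣ (j+1) then ((moebius k : ℤ) : ℂ) else 0)
        = if j + 1 = n then (1 : ℂ) else 0 := by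
      have := congrArg (fun z : ℤ => (z : ℂ)) hkey
      push_cast at this
      rw [← this]
    rw [hkeyC]
    by_cases h : j + 1 = n
    · rw [if_pos h, if_pos (by omega), one_mul, h]
    · rw [if_neg h, if_neg (by omega), zero_mul]
  have hTc : T = c n := by
    have hcomm : (∑' (j : ℕ) (k : ℕ), F (k, j)) = ∑' (k : ℕ) (j : ℕ), F (k, j) :=
      Summable.tsum_comm' hFs hinner hcolsummable
    calc T = ∑' k, g k := hg.tsum_eq.symm
    _ = ∑' (j : ℕ) (k : ℕ), F (k, j) := hcomm.symm
    _ = ∑' j : ℕ, (if j = n - 1 then c n else 0) := by rw [hcol2]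
    _ = c n := tsum_ite_eq (n - 1) (fun _ => c n)
  have := hg.tendsto_sum_nat
  rw [← hTc]
  exact this.congr fun K => (hseq K).symm
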